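/- Let m be a positive measure on ℝ, let 0 < S₀ < K be real numbers and set z = log(K/S₀) > 0. Then, as an identity in [0, ∞], ∫_ℝ (S₀ e^y − K)⁺ m(dy) = S₀ ∫_z^∞ e^x m([x, ∞)) dx. -/

import Mathlib

open MeasureTheory
open scoped ENNReal

/-- For a positive measure `m` on `ℝ`, `0 < S₀ < K` and
`z = log(K/S₀)`, one has, as an identity in `[0,∞]`,
`∫ (S₀ e^y − K)⁺ m(dy) = S₀ ∫_z^∞ e^x m([x,∞)) dx`. -/
theorem lintegral_call_payoff_eq_exponential_double_tail
    (m : Measure ℝ) (S0 K : ℝ) (hS0 : 0 < S0) (hK : S0 < K) :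
    ∫⁻ y, ENNReal.ofReal (max (S0 * Real.exp y - K) 0) ∂m =
      ENNReal.ofReal S0 *
        ∫⁻ x in Set.Ioi (Real.log (K / S0)),
          ENNReal.ofReal (Real.exp x) * m (Set.Ici x) := by
  set z := Real.log (K / S0) with hz
  have hK0 : 0 < K := hS0.trans hK
  have hKS : (0:ℝ) < K / S0 := div_pos hK0 hS0
  have hez : Real.exp z = K / S0 := Real.exp_log hKS
  -- layer cake
  have hmble : AEMeasurable (fun y => max (S0 * Real.exp y - K) 0) m :=
    (((continuous_const.mul Real.continuous_exp).sub continuous_const).max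
      continuous_const).measurable.aemeasurable
  rw [lintegral_eq_lintegral_meas_le (f := fun y => max (S0 * Real.exp y - K) 0) m (Filter.Eventually.of_forall fun y => le_max_right _ _)
    hmble]
  -- rewrite the superlevel sets
  have hsets : ∀ t ∈ Set.Ioi (0:ℝ),
      m {a : ℝ | t ≤ max (S0 * Real.exp a - K) 0} =
        m (Set.Ici (Real.log ((t + K) / S0))) := by
    intro t ht
    have ht0 : (0:ℝ) < t := ht
    congr 1
    ext y
    have htK : (0:ℝ) < (t + K) / S0 := div_pos (by linarith) hS0
    simp only [Set.mem_setOf_eq, Set.mem_Ici]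
    constructor
    · intro h
      have h' : t ≤ S0 * Real.exp y - K := by
        rcases max_cases (S0 * Real.exp y - K) 0 with ⟨he, _⟩ | ⟨he, _⟩
        · rwa [he] at h
        · rw [he] at h; linarith
      have : (t + K) / S0 ≤ Real.exp y := by
        rw [div_le_iff₀ hS0]; nlinarith [Real.exp_pos y]
      calc Real.log ((t + K) / S0) ≤ Real.log (Real.exp y) :=
            Real.log_le_log htK this
        _ = y := Real.log_exp y
    · intro h
      have : (t + K) / S0 ≤ Real.exp y := by
        calc (t + K) / S0 = Real.exp (Real.log ((t + K) / S0)) := (Real.exp_log htK).symm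
          _ ≤ Real.exp y := Real.exp_le_exp.mpr h
      have h2 : t ≤ S0 * Real.exp y - K := by
        rw [div_le_iff₀ hS0] at this; nlinarith
      exact le_trans h2 (le_max_left _ _)
  rw [setLIntegral_congr_fun measurableSet_Ioi hsets]
  -- change of variables t = S0 * exp x - K
  set F : ℝ → ℝ := fun x => S0 * Real.exp x - K with hF
  have himg : F '' Set.Ioi z = Set.Ioi (0:ℝ) := by
    ext t
    constructor
    · rintro ⟨x, hx, rfl⟩
      have : Real.exp z < Real.exp x := Real.exp_lt_exp.mpr hx
      have : K / S0 < Real.exp x := hez ▸ this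
      have : K < S0 * Real.exp x := by rw [div_lt_iff₀ hS0] at this; linarith
      simpa [hF] using by linarith
    · intro ht
      have ht0 : (0:ℝ) < t := ht
      have htK : (0:ℝ) < (t + K) / S0 := div_pos (by linarith) hS0
      refine ⟨Real.log ((t + K) / S0), ?_, ?_⟩
      · simp only [Set.mem_Ioi, hz]
        exact Real.log_lt_log hKS (by rw [div_lt_div_iff_of_pos_right hS0]; linarith)
      · simp only [hF, Real.exp_log htK]
        field_simp
        ring
  have hderiv : ∀ x ∈ Set.Ioi z,
      HasFDerivWithinAt F ((1 : ℝ →L[ℝ] ℝ).smulRight (S0 * Real.exp x)) (Set.Ioi z) x := by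
    intro x _
    exact (((Real.hasDerivAt_exp x).const_mul S0).sub_const K).hasDerivWithinAt.hasFDerivWithinAt
  have hinj : Set.InjOn F (Set.Ioi z) := by
    intro a _ b _ hab
    simp only [hF] at hab
    have : Real.exp a = Real.exp b := by
      have : S0 * Real.exp a = S0 * Real.exp b := by linarith
      exact mul_left_cancel₀ (ne_of_gt hS0) this
    exact Real.exp_injective this
  have hcov := lintegral_image_eq_lintegral_abs_det_fderiv_mul (μ := volume)
    measurableSet_Ioi hderiv hinj
    (fun t => m (Set.Ici (Real.log ((t + K) / S0))))
  rw [himg] at hcov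
  rw [hcov]
  have heq : ∀ x ∈ Set.Ioi z,
      ENNReal.ofReal |((1 : ℝ →L[ℝ] ℝ).smulRight (S0 * Real.exp x)).det| *
        m (Set.Ici (Real.log ((F x + K) / S0))) =
      ENNReal.ofReal S0 * (ENNReal.ofReal (Real.exp x) * m (Set.Ici x)) := by
    intro x _
    have hFx : (F x + K) / S0 = Real.exp x := by
      simp only [hF]; field_simp; ring
    rw [ContinuousLinearMap.smulRight_one_eq_toSpanSingleton, ContinuousLinearMap.det_toSpanSingleton, hFx, Real.log_exp,
      abs_of_pos (mul_pos hS0 (Real.exp_pos x)),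
      ENNReal.ofReal_mul hS0.le, mul_assoc]
  rw [setLIntegral_congr_fun measurableSet_Ioi heq,
    lintegral_const_mul' _ _ ENNReal.ofReal_ne_top]
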